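/- arXiv:2510.02149 — 5 statements merged into one kernel-verified Lean document; each statement's English description precedes it below -/
import Mathlib

section
/- For positive definite matrices A, B ∈ ℝ^{d×d} with A ⪰ B (A - B positive semidefinite) and any vector x ∈ ℝ^d, we have ‖x‖_A ≤ ‖x‖_B · √(det(A)/det(B)), where ‖x‖_M = √(xᵀMx). -/
open Matrix

lemma key {d : ℕ} (C : Matrix (Fin d) (Fin d) ℝ) (hC : C.IsHermitian)
    (h1 : (C - 1).PosSemidef) (y : Fin d → ℝ) :
    y ⬝ᵥ C *ᵥ y ≤ (y ⬝ᵥ y) * C.det := by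
  set μ := hC.eigenvalues with hμ
  have hμ1 : ∀ i, 1 ≤ μ i := by
    intro i
    have hv := h1.dotProduct_mulVec_nonneg (⇑(hC.eigenvectorBasis i))
    have hvv : star (⇑(hC.eigenvectorBasis i)) ⬝ᵥ (⇑(hC.eigenvectorBasis i)) = 1 := by
      have := hC.eigenvectorBasis.orthonormal.1 i
      have h2 := EuclideanSpace.inner_eq_star_dotProduct (hC.eigenvectorBasis i) (hC.eigenvectorBasis i)
      rw [@inner_self_eq_norm_sq_to_K ℝ] at h2
      rw [this] at h2
      simpa using h2.symm
    rw [sub_mulVec, dotProduct_sub, one_mulVec, hC.mulVec_eigenvectorBasis, dotProduct_smul, hvv] at hv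
    simp only [star_trivial, smul_eq_mul] at hv
    linarith
  set U : Matrix (Fin d) (Fin d) ℝ := (hC.eigenvectorUnitary : Matrix (Fin d) (Fin d) ℝ) with hU
  have hUU : U * star U = 1 := (Matrix.mem_unitaryGroup_iff).mp hC.eigenvectorUnitary.2
  set z : Fin d → ℝ := star U *ᵥ y with hz
  have hyU : y ᵥ* U = z := by
    rw [hz, ← vecMul_transpose]
    congr 1
  have hquad : y ⬝ᵥ C *ᵥ y = ∑ i, μ i * (z i)^2 := by
    conv_lhs => rw [hC.spectral_theorem, Unitary.conjStarAlgAut_apply]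
    rw [← mulVec_mulVec, ← mulVec_mulVec, dotProduct_mulVec (w := diagonal _ *ᵥ (star U *ᵥ y))]
    rw [hyU, ← hz, ← hμ]
    simp [dotProduct, mulVec_diagonal, mul_comm, pow_two, mul_assoc, mul_left_comm]
  have hnorm : y ⬝ᵥ y = ∑ i, (z i)^2 := by
    have h0 : (U * star U) *ᵥ y = y := by rw [hUU, one_mulVec]
    calc y ⬝ᵥ y = y ⬝ᵥ (U * star U) *ᵥ y := by rw [h0]
    _ = (y ᵥ* U) ⬝ᵥ (star U *ᵥ y) := by rw [← mulVec_mulVec, dotProduct_mulVec]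
    _ = ∑ i, (z i)^2 := by rw [hyU, ← hz]; simp [dotProduct, pow_two]
  have hdet : C.det = ∏ i, μ i := by
    have := hC.det_eq_prod_eigenvalues
    simpa using this
  rw [hquad, hnorm, hdet, Finset.sum_mul]
  apply Finset.sum_le_sum
  intro i _
  rw [mul_comm ((z i)^2) _]
  have hp : (1:ℝ) ≤ ∏ j ∈ Finset.univ.erase i, μ j := by
    have := Finset.prod_le_prod (s := Finset.univ.erase i) (f := fun _ => (1:ℝ)) (g := μ)
      (by intros; norm_num) (fun j _ => hμ1 j)
    simpa using this
  have hi : μ i ≤ ∏ j, μ j := by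
    rw [← Finset.mul_prod_erase Finset.univ μ (Finset.mem_univ i)]
    exact le_mul_of_one_le_right (le_trans zero_le_one (hμ1 i)) hp
  exact mul_le_mul_of_nonneg_right hi (sq_nonneg _)

/-- For positive definite matrices A, B with A ⪰ B and any vector x,
‖x‖_A ≤ ‖x‖_B · √(det A / det B), where ‖x‖_M = √(xᵀ M x). -/
theorem stmt1 {d : ℕ} (A B : Matrix (Fin d) (Fin d) ℝ)
    (hA : A.PosDef) (hB : B.PosDef) (hAB : (A - B).PosSemidef) (x : Fin d → ℝ) :
    Real.sqrt (x ⬝ᵥ A.mulVec x) ≤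
      Real.sqrt (x ⬝ᵥ B.mulVec x) * Real.sqrt (A.det / B.det) := by
  set S := (open scoped MatrixOrder in CFC.sqrt B) with hSdef
  have hSherm : S.IsHermitian := by open scoped MatrixOrder in exact (CFC.sqrt_nonneg B).posSemidef.1
  have hSS : S * S = B := by open scoped MatrixOrder in exact CFC.sqrt_mul_sqrt_self B hB.posSemidef.nonneg
  have hdetS : S.det * S.det = B.det := by rw [← det_mul, hSS]
  have hdetSne : S.det ≠ 0 := by
    intro h
    have := hB.det_pos
    rw [← hdetS, h, mul_zero] at this
    exact lt_irrefl _ this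
  have hSunit : IsUnit S.det := isUnit_iff_ne_zero.mpr hdetSne
  set R := S⁻¹ with hRdef
  have hRS : R * S = 1 := nonsing_inv_mul S hSunit
  have hSR : S * R = 1 := mul_nonsing_inv S hSunit
  have hRherm : R.IsHermitian := by
    unfold R
    rw [Matrix.IsHermitian, conjTranspose_nonsing_inv, hSherm.eq]
  set C := R * A * R with hCdef
  have hCherm : C.IsHermitian := by
    unfold C
    rw [Matrix.IsHermitian, conjTranspose_mul, conjTranspose_mul, hRherm.eq, hA.1.eq, mul_assoc]
  have hRBR : R * B * R = 1 := by
    rw [← hSS]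
    simp only [Matrix.mul_assoc]
    rw [hSR, mul_one, hRS]
  have h1 : (C - 1).PosSemidef := by
    have h2 := hAB.mul_mul_conjTranspose_same R
    rw [hRherm.eq] at h2
    have h3 : R * (A - B) * R = C - 1 := by
      rw [Matrix.mul_sub, Matrix.sub_mul, hRBR, hCdef]
    rwa [h3] at h2
  have hdetR : R.det = S.det⁻¹ := by
    rw [hRdef, det_nonsing_inv, Ring.inverse_eq_inv]
  have hdetC : C.det = A.det / B.det := by
    rw [hCdef, det_mul, det_mul, hdetR, ← hdetS]
    field_simp
  have hkey := key C hCherm h1 (S *ᵥ x)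
  have hST : Sᵀ = S := by
    ext i j
    rw [transpose_apply]
    conv_rhs => rw [← hSherm.eq]
    simp [conjTranspose_apply]
  have hSx : S *ᵥ x = x ᵥ* S := by
    rw [← mulVec_transpose, hST]
  have hquad : (S *ᵥ x) ⬝ᵥ C *ᵥ (S *ᵥ x) = x ⬝ᵥ A *ᵥ x := by
    have hSCS : S * (C * S) = A := by
      rw [hCdef, mul_assoc (R * A) R S, hRS, mul_one, ← mul_assoc S R A, hSR, one_mul]
    rw [mulVec_mulVec, hSx, dotProduct_mulVec, vecMul_vecMul, hSCS, ← dotProduct_mulVec]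
  have hnorm : (S *ᵥ x) ⬝ᵥ (S *ᵥ x) = x ⬝ᵥ B *ᵥ x := by
    nth_rewrite 1 [hSx]
    rw [dotProduct_mulVec, vecMul_vecMul, hSS, ← dotProduct_mulVec]
  rw [hquad, hnorm, hdetC] at hkey
  have hBx : 0 ≤ x ⬝ᵥ B *ᵥ x := by
    have := hB.posSemidef.dotProduct_mulVec_nonneg x
    simpa using this
  calc Real.sqrt (x ⬝ᵥ A.mulVec x) ≤ Real.sqrt ((x ⬝ᵥ B.mulVec x) * (A.det / B.det)) :=
        Real.sqrt_le_sqrt hkey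
    _ = Real.sqrt (x ⬝ᵥ B.mulVec x) * Real.sqrt (A.det / B.det) := Real.sqrt_mul hBx _
end

section
/- Let x₁,…,x_N ∈ ℝ^D and λ > 0, and define Λ = λI + Σ_{n=1}^N xₙxₙᵀ. Then Σ_{n=1}^N ‖xₙ‖²_{Λ⁻¹} ≤ D, where ‖x‖²_{Λ⁻¹} = xᵀΛ⁻¹x. -/
open Matrix

lemma aux_posSemidef_vecMulVec {D : ℕ} (v : Fin D → ℝ) :
    (Matrix.vecMulVec v v).PosSemidef := by
  refine Matrix.PosSemidef.of_dotProduct_mulVec_nonneg ?_ ?_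
  · ext i j
    simp [Matrix.vecMulVec_apply, mul_comm]
  · intro y
    have : star y ⬝ᵥ (Matrix.vecMulVec v v).mulVec y = (v ⬝ᵥ y) * (v ⬝ᵥ y) := by
      simp [dotProduct, Matrix.mulVec, Matrix.vecMulVec_apply, Finset.mul_sum,
        Finset.sum_mul]
      congr 1; ext i; congr 1; ext j; ring
    rw [this]
    exact mul_self_nonneg _

lemma aux_trace_mul_vecMulVec {D : ℕ} (M : Matrix (Fin D) (Fin D) ℝ) (v : Fin D → ℝ) :
    (M * Matrix.vecMulVec v v).trace = v ⬝ᵥ M.mulVec v := by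
  simp [Matrix.trace, Matrix.mul_apply, Matrix.vecMulVec_apply, dotProduct,
    Matrix.mulVec, Matrix.diag, Finset.mul_sum]
  congr 1; ext i; congr 1; ext j; ring

/-- For x₁,…,x_N ∈ ℝ^D, λ > 0, and Λ = λI + Σₙ xₙxₙᵀ, we have
Σₙ ‖xₙ‖²_{Λ⁻¹} ≤ D. -/
theorem stmt2 {D N : ℕ} (x : Fin N → Fin D → ℝ) (lam : ℝ) (hlam : 0 < lam)
    (Λ : Matrix (Fin D) (Fin D) ℝ)
    (hΛ : Λ = lam • (1 : Matrix (Fin D) (Fin D) ℝ) + ∑ n, Matrix.vecMulVec (x n) (x n)) :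
    ∑ n, x n ⬝ᵥ Λ⁻¹.mulVec (x n) ≤ (D : ℝ) := by
  have hsum : (∑ n, Matrix.vecMulVec (x n) (x n)).PosSemidef := by
    classical
    induction (Finset.univ : Finset (Fin N)) using Finset.induction with
    | empty => simpa using (Matrix.PosSemidef.zero :
        (0 : Matrix (Fin D) (Fin D) ℝ).PosSemidef)
    | insert _ _ h ih =>
      rw [Finset.sum_insert h]
      exact (aux_posSemidef_vecMulVec _).add ih
  have hsmul : (lam • (1 : Matrix (Fin D) (Fin D) ℝ)).PosDef := by
    have : lam • (1 : Matrix (Fin D) (Fin D) ℝ) = Matrix.diagonal (fun _ => lam) := by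
      ext i j
      by_cases h : i = j <;> simp [h, Matrix.one_apply, Matrix.diagonal]
    rw [this]
    exact Matrix.PosDef.diagonal (fun _ => hlam)
  have hΛpos : Λ.PosDef := by
    rw [hΛ]; exact hsmul.add_posSemidef hsum
  have hinv : Λ⁻¹.PosDef := hΛpos.inv
  have hdet : Λ.det ≠ 0 := hΛpos.det_pos.ne'
  -- trace of Λ⁻¹ is nonneg
  have htr : 0 ≤ Λ⁻¹.trace := by
    apply Finset.sum_nonneg
    intro i _
    have := hinv.dotProduct_mulVec_pos (x := Pi.single i 1) (by
      intro h
      have := congrFun h i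
      simp [Pi.single_eq_same] at this)
    simpa [Matrix.mulVec_single, dotProduct, Pi.single_apply, Matrix.diag] using this.le
  have key : ∑ n, x n ⬝ᵥ Λ⁻¹.mulVec (x n)
      = (D : ℝ) - lam * Λ⁻¹.trace := by
    have h1 : ∑ n, x n ⬝ᵥ Λ⁻¹.mulVec (x n)
        = (Λ⁻¹ * (∑ n, Matrix.vecMulVec (x n) (x n))).trace := by
      rw [Finset.mul_sum, Matrix.trace_sum]
      exact (Finset.sum_congr rfl fun n _ => (aux_trace_mul_vecMulVec _ _).symm)
    have h2 : (∑ n, Matrix.vecMulVec (x n) (x n))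
        = Λ - lam • (1 : Matrix (Fin D) (Fin D) ℝ) := by
      rw [hΛ]; abel
    rw [h1, h2, Matrix.mul_sub, Matrix.trace_sub, Matrix.nonsing_inv_mul _ (isUnit_iff_ne_zero.mpr hdet),
      Matrix.trace_one, Matrix.mul_smul, Matrix.mul_one, Matrix.trace_smul]
    simp
  rw [key]
  nlinarith [mul_nonneg hlam.le htr]
end

section
/- Let (aᵢ), (bᵢ) be sequences in [0,1] with |aᵢ - bᵢ| ≤ ε for all i, where ε ∈ [0,1]. Write āᵢ = 1 - aᵢ and b̄ᵢ = 1 - bᵢ. Then for every γ ∈ (0,1), Σ_{k=1}^∞ γᵏ |(∏_{i=1}^{k-1} b̄ᵢ)·b_k − (∏_{i=1}^{k-1} āᵢ)·a_k| ≤ 2ε/(1-γ). -/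
/-- For sequences (aᵢ), (bᵢ) in [0,1] with |aᵢ - bᵢ| ≤ ε (ε ∈ [0,1]),
with āᵢ = 1 - aᵢ, b̄ᵢ = 1 - bᵢ, for every γ ∈ (0,1):
Σ_{k=1}^∞ γᵏ |(∏_{i<k} b̄ᵢ)·b_k − (∏_{i<k} āᵢ)·a_k| ≤ 2ε/(1-γ). -/
theorem stmt4 (a b : ℕ → ℝ) (ε γ : ℝ) (hε : ε ∈ Set.Icc (0:ℝ) 1)
    (hγ : γ ∈ Set.Ioo (0:ℝ) 1)
    (ha : ∀ i, a i ∈ Set.Icc (0:ℝ) 1) (hb : ∀ i, b i ∈ Set.Icc (0:ℝ) 1)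
    (hab : ∀ i, |a i - b i| ≤ ε) :
    ∑' k : ℕ, γ ^ (k + 1) *
        |(∏ i ∈ Finset.range k, (1 - b i)) * b k - (∏ i ∈ Finset.range k, (1 - a i)) * a k|
      ≤ 2 * ε / (1 - γ) := by
  obtain ⟨hε0, hε1⟩ := hε
  obtain ⟨hγ0, hγ1⟩ := hγ
  set Pa : ℕ → ℝ := fun k => ∏ i ∈ Finset.range k, (1 - a i) with hPa
  set Pb : ℕ → ℝ := fun k => ∏ i ∈ Finset.range k, (1 - b i) with hPb
  set D : ℕ → ℝ := fun k => Pb k - Pa k with hDdef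
  set f : ℕ → ℝ := fun k => γ ^ (k + 1) * |Pb k * b k - Pa k * a k| with hfdef
  have hPa01 : ∀ k, 0 ≤ Pa k ∧ Pa k ≤ 1 := by
    intro k
    constructor
    · exact Finset.prod_nonneg fun i _ => by linarith [(ha i).2]
    · exact Finset.prod_le_one (fun i _ => by linarith [(ha i).2])
        (fun i _ => by linarith [(ha i).1])
  have hPb01 : ∀ k, 0 ≤ Pb k ∧ Pb k ≤ 1 := by
    intro k
    constructor
    · exact Finset.prod_nonneg fun i _ => by linarith [(hb i).2]
    · exact Finset.prod_le_one (fun i _ => by linarith [(hb i).2])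
        (fun i _ => by linarith [(hb i).1])
  -- term bound
  have hterm : ∀ k, |Pb k * b k - Pa k * a k| ≤ |D k| * b k + ε := by
    intro k
    have h1 : Pb k * b k - Pa k * a k = D k * b k + Pa k * (b k - a k) := by
      simp only [hDdef]; ring
    rw [h1]
    calc |D k * b k + Pa k * (b k - a k)| ≤ |D k * b k| + |Pa k * (b k - a k)| :=
          abs_add_le _ _
      _ ≤ |D k| * b k + ε := by
          rw [abs_mul, abs_mul, abs_of_nonneg (hb k).1, abs_of_nonneg (hPa01 k).1]
          have h2 : |b k - a k| ≤ ε := by rw [abs_sub_comm]; exact hab k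
          nlinarith [(hPa01 k).1, (hPa01 k).2, abs_nonneg (b k - a k)]
  -- recursion bound on D
  have hDrec : ∀ k, |D (k + 1)| ≤ |D k| * (1 - b k) + ε := by
    intro k
    have h1 : D (k + 1) = D k * (1 - b k) + Pa k * (a k - b k) := by
      simp only [hDdef, hPa, hPb, Finset.prod_range_succ]; ring
    rw [h1]
    calc |D k * (1 - b k) + Pa k * (a k - b k)| ≤ |D k * (1 - b k)| + |Pa k * (a k - b k)| :=
          abs_add_le _ _
      _ ≤ |D k| * (1 - b k) + ε := by
          rw [abs_mul, abs_mul, abs_of_nonneg (show (0:ℝ) ≤ 1 - b k by linarith [(hb k).2]),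
            abs_of_nonneg (hPa01 k).1]
          nlinarith [(hPa01 k).1, (hPa01 k).2, abs_nonneg (a k - b k), hab k]
  -- main finite-sum invariant
  have hmain : ∀ n, (∑ k ∈ Finset.range n, f k) + γ ^ (n + 1) * |D n|
      ≤ 2 * ε * ∑ k ∈ Finset.range n, γ ^ (k + 1) := by
    intro n
    induction n with
    | zero => simp [hDdef, hPa, hPb]
    | succ n ih =>
        rw [Finset.sum_range_succ, Finset.sum_range_succ]
        have hγpow : (0:ℝ) < γ ^ (n + 1) := pow_pos hγ0 _
        have hkey : f n + γ ^ (n + 2) * |D (n + 1)| ≤ γ ^ (n + 1) * |D n| + 2 * ε * γ ^ (n + 1) := by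
          have h1 : f n ≤ γ ^ (n + 1) * (|D n| * b n + ε) := by
            simp only [hfdef]
            exact mul_le_mul_of_nonneg_left (hterm n) (le_of_lt hγpow)
          have h2 : γ ^ (n + 2) * |D (n + 1)| ≤ γ ^ (n + 1) * |D (n + 1)| := by
            have : γ ^ (n + 2) ≤ γ ^ (n + 1) :=
              pow_le_pow_of_le_one (le_of_lt hγ0) (le_of_lt hγ1) (by omega)
            exact mul_le_mul_of_nonneg_right this (abs_nonneg _)
          have h3 : γ ^ (n + 1) * |D (n + 1)| ≤ γ ^ (n + 1) * (|D n| * (1 - b n) + ε) :=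
            mul_le_mul_of_nonneg_left (hDrec n) (le_of_lt hγpow)
          nlinarith
        linarith
  have hfin : ∀ n, ∑ k ∈ Finset.range n, f k ≤ 2 * ε / (1 - γ) := by
    intro n
    have h1 : ∑ k ∈ Finset.range n, γ ^ (k + 1) ≤ 1 / (1 - γ) := by
      have hg : ∑ k ∈ Finset.range n, γ ^ k ≤ 1 / (1 - γ) := by
        rw [geom_sum_eq (by linarith : γ ≠ 1)]
        have heq : (γ ^ n - 1) / (γ - 1) = (1 - γ ^ n) / (1 - γ) := by
          rw [← neg_div_neg_eq]; ring_nf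
        rw [heq]
        have hpn : 0 ≤ γ ^ n := pow_nonneg (le_of_lt hγ0) n
        exact div_le_div₀ zero_le_one (by linarith) (by linarith) le_rfl
      calc ∑ k ∈ Finset.range n, γ ^ (k + 1) = γ * ∑ k ∈ Finset.range n, γ ^ k := by
            rw [Finset.mul_sum]; apply Finset.sum_congr rfl; intro k _; ring
        _ ≤ 1 * (1 / (1 - γ)) := by
            apply mul_le_mul (le_of_lt hγ1) hg
              (Finset.sum_nonneg fun k _ => pow_nonneg (le_of_lt hγ0) _) zero_le_one
        _ = 1 / (1 - γ) := one_mul _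
    have h2 := hmain n
    have h3 : (0:ℝ) ≤ γ ^ (n + 1) * |D n| := mul_nonneg (pow_nonneg (le_of_lt hγ0) _) (abs_nonneg _)
    have h4 : 2 * ε * ∑ k ∈ Finset.range n, γ ^ (k + 1) ≤ 2 * ε * (1 / (1 - γ)) :=
      mul_le_mul_of_nonneg_left h1 (by linarith)
    have : 2 * ε * (1 / (1 - γ)) = 2 * ε / (1 - γ) := by ring
    linarith
  exact Real.tsum_le_of_sum_range_le
    (fun k => mul_nonneg (pow_nonneg (le_of_lt hγ0) _) (abs_nonneg _)) hfin
end

section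
/- Suppose for each a in a finite set 𝒜 we have matrices M_a, M̂_a ∈ ℝ^{d×d} with ‖M̂_a − M_a‖₂ ≤ ε (spectral norm) and ‖∏_{i=1}^k M_{a_i}‖₂ ≤ √d for every finite word a₁,…,a_k ∈ 𝒜. Then for every n and a₁,…,aₙ ∈ 𝒜, ‖∏_{i=1}^n M̂_{a_i}‖₂ ≤ √d·(1+ε√d)ⁿ. -/
open Matrix

/-- Spectral (ℓ²-operator) norm of a real square matrix. -/
noncomputable def specNorm {d : ℕ} (M : Matrix (Fin d) (Fin d) ℝ) : ℝ :=
  ‖Matrix.toEuclideanCLM (𝕜 := ℝ) M‖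

lemma specNorm_nonneg {d : ℕ} (M : Matrix (Fin d) (Fin d) ℝ) : 0 ≤ specNorm M :=
  norm_nonneg _

lemma specNorm_mul_le {d : ℕ} (A B : Matrix (Fin d) (Fin d) ℝ) :
    specNorm (A * B) ≤ specNorm A * specNorm B := by
  unfold specNorm; rw [_root_.map_mul]; exact norm_mul_le _ _

lemma specNorm_add_le {d : ℕ} (A B : Matrix (Fin d) (Fin d) ℝ) :
    specNorm (A + B) ≤ specNorm A + specNorm B := by
  unfold specNorm; rw [_root_.map_add]; exact norm_add_le _ _

/-- If ‖M̂_a − M_a‖₂ ≤ ε for all a, and every finite product of the true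
matrices has spectral norm ≤ √d, then every n-fold product of the estimates satisfies
‖∏ M̂_{a_i}‖₂ ≤ √d·(1+ε√d)ⁿ. -/
theorem stmt5 {d : ℕ} {A : Type*} [Fintype A]
    (M Mh : A → Matrix (Fin d) (Fin d) ℝ) (ε : ℝ)
    (hest : ∀ a, specNorm (Mh a - M a) ≤ ε)
    (hprod : ∀ (k : ℕ) (w : Fin k → A),
      specNorm ((List.ofFn fun i => M (w i)).prod) ≤ Real.sqrt d)
    (n : ℕ) (w : Fin n → A) :
    specNorm ((List.ofFn fun i => Mh (w i)).prod) ≤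
      Real.sqrt d * (1 + ε * Real.sqrt d) ^ n := by
  set s := Real.sqrt d with hs
  have hs0 : 0 ≤ s := Real.sqrt_nonneg _
  have key : ∀ (n : ℕ) (w : Fin n → A) (P : Matrix (Fin d) (Fin d) ℝ),
      (∀ (k : ℕ) (u : Fin k → A),
        specNorm (P * (List.ofFn fun i => M (u i)).prod) ≤ s) →
      specNorm (P * (List.ofFn fun i => Mh (w i)).prod) ≤ s * (1 + ε * s) ^ n := by
    intro n
    induction n with
    | zero =>
      intro w P hP
      have := hP 0 Fin.elim0
      simpa using this
    | succ n ih =>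
      intro w P hP
      have hε : 0 ≤ ε := le_trans (specNorm_nonneg _) (hest (w 0))
      have hfac : (0:ℝ) ≤ 1 + ε * s := by positivity
      set R : Matrix (Fin d) (Fin d) ℝ := (List.ofFn fun i => Mh (w i.succ)).prod with hR
      -- bound on R (empty prefix)
      have h1 : ∀ (k : ℕ) (u : Fin k → A),
          specNorm ((1 : Matrix (Fin d) (Fin d) ℝ) * (List.ofFn fun i => M (u i)).prod) ≤ s := by
        intro k u; simpa using hprod k u
      have hRbound : specNorm R ≤ s * (1 + ε * s) ^ n := by
        have := ih (fun i => w i.succ) 1 h1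
        simpa [hR] using this
      -- P itself is bounded
      have hPb : specNorm P ≤ s := by
        have := hP 0 Fin.elim0
        simpa using this
      -- P * M (w 0) is a good prefix
      have hPM : ∀ (k : ℕ) (u : Fin k → A),
          specNorm ((P * M (w 0)) * (List.ofFn fun i => M (u i)).prod) ≤ s := by
        intro k u
        have := hP (k + 1) (Fin.cons (w 0) u)
        rw [List.ofFn_succ] at this
        simpa [mul_assoc] using this
      have hterm2 : specNorm ((P * M (w 0)) * R) ≤ s * (1 + ε * s) ^ n :=
        ih (fun i => w i.succ) (P * M (w 0)) hPM
      -- term 1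
      have hterm1 : specNorm ((P * (Mh (w 0) - M (w 0))) * R) ≤ (s * ε) * (s * (1 + ε * s) ^ n) := by
        calc specNorm ((P * (Mh (w 0) - M (w 0))) * R)
            ≤ specNorm (P * (Mh (w 0) - M (w 0))) * specNorm R := specNorm_mul_le _ _
          _ ≤ (specNorm P * specNorm (Mh (w 0) - M (w 0))) * specNorm R := by
              gcongr
              · exact specNorm_nonneg _
              · exact specNorm_mul_le _ _
          _ ≤ (s * ε) * (s * (1 + ε * s) ^ n) := by
              apply mul_le_mul
              · exact mul_le_mul hPb (hest (w 0)) (specNorm_nonneg _)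
                  (le_trans (specNorm_nonneg _) hPb)
              · exact hRbound
              · exact specNorm_nonneg _
              · positivity
      have hsplit : P * (List.ofFn fun i => Mh (w i)).prod
          = (P * (Mh (w 0) - M (w 0))) * R + (P * M (w 0)) * R := by
        rw [List.ofFn_succ, List.prod_cons]
        noncomm_ring
      rw [hsplit]
      calc specNorm ((P * (Mh (w 0) - M (w 0))) * R + (P * M (w 0)) * R)
          ≤ specNorm ((P * (Mh (w 0) - M (w 0))) * R) + specNorm ((P * M (w 0)) * R) :=
            specNorm_add_le _ _
        _ ≤ (s * ε) * (s * (1 + ε * s) ^ n) + s * (1 + ε * s) ^ n := by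
            exact add_le_add hterm1 hterm2
        _ = s * (1 + ε * s) ^ (n + 1) := by ring
  have := key n w 1 (by intro k u; simpa using hprod k u)
  simpa using this
end

section
/- Let Λ₀ be a symmetric positive definite D×D matrix with λ_min(Λ₀) ≥ 1, and (xₙ) a sequence in ℝ^D with ‖xₙ‖₂ ≤ 1. Define Λ_N = Λ₀ + Σ_{n=1}^N xₙxₙᵀ. Then for all N, log(det(Λ_N)/det(Λ₀)) ≤ Σ_{n=1}^N ‖xₙ‖²_{Λ_{n-1}⁻¹} ≤ 2·log(det(Λ_N)/det(Λ₀)). -/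
open Matrix

/-- elliptical potential lemma: For symmetric Λ₀ ⪰ I and vectors xₙ with
‖xₙ‖₂ ≤ 1, with Λ_N = Λ₀ + Σ_{n<N} xₙxₙᵀ,
log(det Λ_N / det Λ₀) ≤ Σ_{n<N} ‖xₙ‖²_{Λ_n⁻¹} ≤ 2·log(det Λ_N / det Λ₀). -/
theorem stmt15 {D : ℕ} (Λ₀ : Matrix (Fin D) (Fin D) ℝ)
    (hΛ₀ : (Λ₀ - 1).PosSemidef)
    (x : ℕ → Fin D → ℝ) (hx : ∀ n, Real.sqrt (x n ⬝ᵥ x n) ≤ 1)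
    (Λ : ℕ → Matrix (Fin D) (Fin D) ℝ)
    (hΛ : ∀ N, Λ N = Λ₀ + ∑ n ∈ Finset.range N, Matrix.vecMulVec (x n) (x n))
    (N : ℕ) :
    Real.log ((Λ N).det / Λ₀.det) ≤
        ∑ n ∈ Finset.range N, x n ⬝ᵥ (Λ n)⁻¹.mulVec (x n) ∧
      ∑ n ∈ Finset.range N, x n ⬝ᵥ (Λ n)⁻¹.mulVec (x n) ≤
        2 * Real.log ((Λ N).det / Λ₀.det) := by
  classical
  -- outer products are PSD
  have houter : ∀ n, (vecMulVec (x n) (x n)).PosSemidef := by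
    intro n
    rw [vecMulVec_eq Unit]
    have h := posSemidef_self_mul_conjTranspose (replicateCol Unit (x n))
    rwa [conjTranspose_replicateCol, star_trivial] at h
  have hsum : ∀ n, (∑ k ∈ Finset.range n, vecMulVec (x k) (x k)).PosSemidef := by
    intro n
    induction n with
    | zero => simpa using Matrix.PosSemidef.zero
    | succ k ih => rw [Finset.sum_range_succ]; exact ih.add (houter k)
  have hsub : ∀ n, ((Λ n) - 1).PosSemidef := by
    intro n
    have h : Λ n - 1 = (Λ₀ - 1) + ∑ k ∈ Finset.range n, vecMulVec (x k) (x k) := by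
      rw [hΛ n]; abel
    rw [h]
    exact hΛ₀.add (hsum n)
  have hpd : ∀ n, (Λ n).PosDef := by
    intro n
    have h1 : (1 : Matrix (Fin D) (Fin D) ℝ).PosDef := Matrix.PosDef.one
    have h := Matrix.PosDef.posSemidef_add (hsub n) h1
    rwa [sub_add_cancel] at h
  set u : ℕ → ℝ := fun n => x n ⬝ᵥ (Λ n)⁻¹.mulVec (x n) with hu
  have hu0 : ∀ n, 0 ≤ u n := by
    intro n
    have h := ((hpd n).inv).posSemidef.dotProduct_mulVec_nonneg (x n)
    simpa using h
  have hxx : ∀ n, x n ⬝ᵥ x n ≤ 1 := by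
    intro n
    have hnn : 0 ≤ x n ⬝ᵥ x n := by
      simpa [dotProduct] using Finset.sum_nonneg (fun i _ => mul_self_nonneg (x n i))
    nlinarith [Real.sq_sqrt hnn, hx n, Real.sqrt_nonneg (x n ⬝ᵥ x n)]
  have hu1 : ∀ n, u n ≤ 1 := by
    intro n
    set y : Fin D → ℝ := (Λ n)⁻¹.mulVec (x n) with hy
    have hMy : (Λ n).mulVec y = x n := by
      rw [hy, mulVec_mulVec, mul_nonsing_inv _ (hpd n).det_pos.ne'.isUnit, one_mulVec]
    -- y ⬝ y ≤ y ⬝ (Λ n y) = y ⬝ x = u n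
    have hyy : y ⬝ᵥ y ≤ u n := by
      have h := (hsub n).dotProduct_mulVec_nonneg y
      rw [star_trivial, sub_mulVec, dotProduct_sub, one_mulVec, hMy] at h
      have : y ⬝ᵥ x n = u n := by rw [hu, hy]; exact dotProduct_comm _ _
      linarith [this ▸ h]
    -- Cauchy–Schwarz : u n ^ 2 ≤ (x ⬝ x) * (y ⬝ y)
    have hcs : u n ^ 2 ≤ (x n ⬝ᵥ x n) * (y ⬝ᵥ y) := by
      have h := Finset.sum_mul_sq_le_sq_mul_sq Finset.univ (x n) y
      simpa [hu, ← hy, dotProduct, pow_two] using h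
    have hxn : 0 ≤ x n ⬝ᵥ x n := by
      simpa [dotProduct] using Finset.sum_nonneg (fun i _ => mul_self_nonneg (x n i))
    nlinarith [hu0 n, hxx n, hyy, hcs, hxn]
  -- determinant recursion
  have hdet_pos : ∀ n, 0 < (Λ n).det := fun n => (hpd n).det_pos
  have hdet : ∀ n, (Λ (n + 1)).det = (Λ n).det * (1 + u n) := by
    intro n
    have hstep : Λ (n + 1) = Λ n + replicateCol Unit (x n) * replicateRow Unit (x n) := by
      rw [hΛ (n + 1), hΛ n, Finset.sum_range_succ, ← add_assoc, ← vecMulVec_eq Unit]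
    rw [hstep, det_add_replicateCol_mul_replicateRow (hdet_pos n).ne'.isUnit]
    congr 1
    rw [det_unique]
    have hrc : (replicateRow Unit (x n) * (Λ n)⁻¹ * replicateCol Unit (x n)) default default = u n := by
      simp only [mul_apply, replicateRow_apply, replicateCol_apply, hu, dotProduct, mulVec,
        Finset.sum_mul, Finset.mul_sum]
      rw [Finset.sum_comm]
      exact Finset.sum_congr rfl fun j _ => Finset.sum_congr rfl fun i _ => by ring
    simp [hrc]
  have hΛ₀det : (0:ℝ) < Λ₀.det := by
    have h0 : Λ 0 = Λ₀ := by rw [hΛ 0]; simp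
    rw [← h0]; exact hdet_pos 0
  -- telescoping log identity
  have hlog : ∀ n, Real.log ((Λ n).det / Λ₀.det) =
      ∑ k ∈ Finset.range n, Real.log (1 + u k) := by
    intro n
    induction n with
    | zero =>
      have h0 : Λ 0 = Λ₀ := by rw [hΛ 0]; simp
      rw [h0, div_self hΛ₀det.ne', Real.log_one, Finset.range_zero, Finset.sum_empty]
    | succ k ih =>
      have h1 : 0 < 1 + u k := by linarith [hu0 k]
      have h2 : (Λ (k + 1)).det / Λ₀.det = ((Λ k).det / Λ₀.det) * (1 + u k) := by
        rw [hdet k]; ring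
      rw [Finset.sum_range_succ, ← ih, h2,
        Real.log_mul (div_pos (hdet_pos k) hΛ₀det).ne' h1.ne']
  -- pointwise bounds
  have hlow : ∀ n, Real.log (1 + u n) ≤ u n := by
    intro n
    have := Real.log_le_sub_one_of_pos (by linarith [hu0 n] : (0:ℝ) < 1 + u n)
    linarith
  have hhigh : ∀ n, u n ≤ 2 * Real.log (1 + u n) := by
    intro n
    have h1 : (0:ℝ) < 1 + u n := by linarith [hu0 n]
    have h2 := Real.one_sub_inv_le_log_of_pos h1
    have h3 : (1 + u n) * (1 + u n)⁻¹ = 1 := mul_inv_cancel₀ h1.ne'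
    nlinarith [hu0 n, hu1 n, inv_pos.mpr h1]
  constructor
  · rw [hlog N]
    exact Finset.sum_le_sum fun n _ => hlow n
  · rw [hlog N, Finset.mul_sum]
    exact Finset.sum_le_sum fun n _ => hhigh n
end
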